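/- Let C and D be stable configuration structures, let X be a configuration of C and Y a configuration of D, and suppose f : X ≅ Y is a label-preserving order isomorphism. Then for every formula φ of the reverse-only logic EIL_ro and every environment ρ that is permissible for φ and X, one has C, X, ρ ⊨ φ if and only if D, Y, f ∘ (ρ restricted to the free identifiers of φ) ⊨ φ. -/

import Mathlib

open scoped Classical

noncomputable section

namespace EILPaper

/-- A configuration structure over event type `E` and alphabet `Act`:
a family of finite sets of events (configurations) together with a labelling. -/
structure CS (E Act : Type) where
  Conf : Set (Finset E)
  label : E → Act

namespace CS

variable {E Act : Type}

/-- Causality order `d ≤_X e`. -/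
def le (C : CS E Act) (X : Finset E) (d e : E) : Prop :=
  ∀ Y ∈ C.Conf, Y ⊆ X → e ∈ Y → d ∈ Y

/-- Stability of a configuration structure. -/
structure Stable (C : CS E Act) : Prop where
  rooted : ∅ ∈ C.Conf
  connected : ∀ X ∈ C.Conf, X ≠ ∅ → ∃ e ∈ X, X.erase e ∈ C.Conf
  unionClosed : ∀ X ∈ C.Conf, ∀ Y ∈ C.Conf, ∀ Z ∈ C.Conf, X ∪ Y ⊆ Z → X ∪ Y ∈ C.Conf
  interClosed : ∀ X ∈ C.Conf, ∀ Y ∈ C.Conf, ∀ Z ∈ C.Conf, X ∪ Y ⊆ Z → X ∩ Y ∈ C.Conf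

/-- Single-event forward transition `X →^e X'`. -/
def TranE (C : CS E Act) (X X' : Finset E) (e : E) : Prop :=
  X ∈ C.Conf ∧ X' ∈ C.Conf ∧ X ⊆ X' ∧ X' \ X = {e}

/-- Label-indexed forward transition `X →^a X'`. -/
def TranA (C : CS E Act) (X X' : Finset E) (a : Act) : Prop :=
  ∃ e, C.TranE X X' e ∧ C.label e = a

/-- Reverse transition `X ⇝^e X'`. -/
def RTranE (C : CS E Act) (X X' : Finset E) (e : E) : Prop := C.TranE X' X e

/-- Reverse transition `X ⇝^a X'`. -/
def RTranA (C : CS E Act) (X X' : Finset E) (a : Act) : Prop := C.TranA X' X a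

/-- Image-finiteness with respect to forward transitions. -/
def ImageFinite (C : CS E Act) : Prop :=
  ∀ X ∈ C.Conf, ∀ a : Act, {X' | C.TranA X X' a}.Finite

/-- A configuration structure is finite if its set of configurations is finite. -/
def Finite (C : CS E Act) : Prop := C.Conf.Finite

/-- The events of a configuration structure. -/
def events (C : CS E Act) : Set E := {e | ∃ X ∈ C.Conf, e ∈ X}

end CS

variable {E E1 E2 E3 Id Act : Type}

/-- `f` is a label-preserving order isomorphism from configuration `X` of `C`
to configuration `Y` of `D`. -/
def IsIso (C : CS E1 Act) (D : CS E2 Act) (X : Finset E1) (Y : Finset E2)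
    (f : E1 → E2) : Prop :=
  (∀ e ∈ X, f e ∈ Y) ∧
  (∀ d ∈ X, ∀ e ∈ X, f d = f e → d = e) ∧
  (∀ e' ∈ Y, ∃ e ∈ X, f e = e') ∧
  (∀ e ∈ X, D.label (f e) = C.label e) ∧
  (∀ d ∈ X, ∀ e ∈ X, (C.le X d e ↔ D.le Y (f d) (f e)))

/-- `X ≅ Y`: the configurations are isomorphic. -/
def Isom (C : CS E1 Act) (D : CS E2 Act) (X : Finset E1) (Y : Finset E2) : Prop :=
  ∃ f, IsIso C D X Y f

/-- Formulas of Event Identifier Logic (EIL). -/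
inductive EIL (Id Act : Type) : Type
  | tt : EIL Id Act
  | neg : EIL Id Act → EIL Id Act
  | conj : EIL Id Act → EIL Id Act → EIL Id Act
  | fwd : Id → Act → EIL Id Act → EIL Id Act   -- forward diamond ⟨x:a⟩φ
  | decl : Id → Act → EIL Id Act → EIL Id Act  -- declaration (x:a)φ
  | rev : Id → EIL Id Act → EIL Id Act         -- reverse diamond ⟨x⟩φ

namespace EIL

/-- Free identifiers of a formula. -/
def fi : EIL Id Act → Set Id
  | .tt => ∅
  | .neg φ => φ.fi
  | .conj φ ψ => φ.fi ∪ ψ.fi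
  | .fwd x _ φ => φ.fi \ {x}
  | .decl x _ φ => φ.fi \ {x}
  | .rev x φ => φ.fi ∪ {x}

/-- A formula is closed if it has no free identifiers. -/
def Closed (φ : EIL Id Act) : Prop := φ.fi = ∅

end EIL

/-- `ρ` is a permissible environment for `φ` and `X`. -/
def Permissible (φ : EIL Id Act) (ρ : Id → Option E) (X : Finset E) : Prop :=
  ∀ x ∈ φ.fi, ∃ e ∈ X, ρ x = some e

/-- The satisfaction relation `C, X, ρ ⊨ φ`. -/
def Sat (C : CS E Act) : EIL Id Act → Finset E → (Id → Option E) → Prop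
  | .tt, _, _ => True
  | .neg φ, X, ρ => ¬ Sat C φ X ρ
  | .conj φ ψ, X, ρ => Sat C φ X ρ ∧ Sat C ψ X ρ
  | .fwd x a φ, X, ρ =>
      ∃ e X', C.TranE X X' e ∧ C.label e = a ∧
        Sat C φ X' (Function.update ρ x (some e))
  | .decl x a φ, X, ρ =>
      ∃ e ∈ X, C.label e = a ∧ Sat C φ X (Function.update ρ x (some e))
  | .rev x φ, X, ρ =>
      ∃ e X', C.RTranE X X' e ∧ ρ x = some e ∧ Permissible φ ρ X' ∧ Sat C φ X' ρ

/-- Satisfaction of a closed formula in a configuration: `C, X ⊨ φ`. -/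
def SatC (C : CS E Act) (φ : EIL Id Act) (X : Finset E) : Prop :=
  Sat C φ X fun _ => none

/-- Satisfaction of a closed formula by a structure: `C ⊨ φ`. -/
def SatS (C : CS E Act) (φ : EIL Id Act) : Prop := SatC C φ ∅

/-- The reverse-only sublogic EIL_ro. -/
inductive RO : EIL Id Act → Prop
  | tt : RO .tt
  | neg {φ} : RO φ → RO (.neg φ)
  | conj {φ ψ} : RO φ → RO ψ → RO (.conj φ ψ)
  | decl {x a φ} : RO φ → RO (.decl x a φ)
  | rev {x φ} : RO φ → RO (.rev x φ)

/-- The declaration-free reverse-only sublogic EIL_dfro. -/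
inductive DFRO : EIL Id Act → Prop
  | tt : DFRO .tt
  | neg {φ} : DFRO φ → DFRO (.neg φ)
  | conj {φ ψ} : DFRO φ → DFRO ψ → DFRO (.conj φ ψ)
  | rev {x φ} : DFRO φ → DFRO (.rev x φ)

/-- The sublogic EIL_h: no forward move may occur inside a reverse move. -/
inductive InH : EIL Id Act → Prop
  | tt : InH .tt
  | neg {φ} : InH φ → InH (.neg φ)
  | conj {φ ψ} : InH φ → InH ψ → InH (.conj φ ψ)
  | fwd {x a φ} : InH φ → InH (.fwd x a φ)
  | decl {x a φ} : InH φ → InH (.decl x a φ)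
  | ro {φ} : RO φ → InH φ

/-- The sublogic EIL_wh: all formulas are closed, reverse-only parts are closed. -/
inductive InWH : EIL Id Act → Prop
  | tt : InWH .tt
  | neg {φ} : InWH φ → InWH (.neg φ)
  | conj {φ ψ} : InWH φ → InWH ψ → InWH (.conj φ ψ)
  | fwd {x a φ} : InWH φ → x ∉ φ.fi → InWH (.fwd x a φ)
  | roClosed {φ} : RO φ → φ.Closed → InWH φ

/-- The sublogic EIL_hwh: forward diamonds only applied to closed formulas. -/
inductive InHWH : EIL Id Act → Prop
  | tt : InHWH .tt
  | neg {φ} : InHWH φ → InHWH (.neg φ)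
  | conj {φ ψ} : InHWH φ → InHWH ψ → InHWH (.conj φ ψ)
  | fwd {x a φ} : InHWH φ → φ.Closed → InHWH (.fwd x a φ)
  | decl {x a φ} : InHWH φ → InHWH (.decl x a φ)
  | rev {x φ} : InHWH φ → InHWH (.rev x φ)

/-- Logical equivalence of two structures with respect to a sublogic `L`. -/
def EquivL (L : EIL Id Act → Prop) (C : CS E1 Act) (D : CS E2 Act) : Prop :=
  ∀ φ : EIL Id Act, L φ → φ.Closed → (SatS C φ ↔ SatS D φ)

/-- Weak history-preserving bisimulation. -/
structure IsWHBisim (C : CS E1 Act) (D : CS E2 Act)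
    (R : Finset E1 → Finset E2 → Prop) : Prop where
  root : R ∅ ∅
  iso : ∀ X Y, R X Y → Isom C D X Y
  forth : ∀ X Y a X', R X Y → C.TranA X X' a → ∃ Y', D.TranA Y Y' a ∧ R X' Y'
  back : ∀ X Y a Y', R X Y → D.TranA Y Y' a → ∃ X', C.TranA X X' a ∧ R X' Y'

/-- History-preserving bisimulation. -/
structure IsHBisim (C : CS E1 Act) (D : CS E2 Act)
    (R : Finset E1 → Finset E2 → (E1 → E2) → Prop) : Prop where
  root : ∃ f, R ∅ ∅ f
  iso : ∀ X Y f, R X Y f → IsIso C D X Y f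
  forth : ∀ X Y f a X', R X Y f → C.TranA X X' a →
    ∃ Y' f', D.TranA Y Y' a ∧ R X' Y' f' ∧ ∀ e ∈ X, f' e = f e
  back : ∀ X Y f a Y', R X Y f → D.TranA Y Y' a →
    ∃ X' f', C.TranA X X' a ∧ R X' Y' f' ∧ ∀ e ∈ X, f' e = f e

/-- Hereditary history-preserving bisimulation. -/
structure IsHHBisim (C : CS E1 Act) (D : CS E2 Act)
    (R : Finset E1 → Finset E2 → (E1 → E2) → Prop)
    extends IsHBisim C D R : Prop where
  rforth : ∀ X Y f a X', R X Y f → C.RTranA X X' a →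
    ∃ Y' f', D.RTranA Y Y' a ∧ R X' Y' f' ∧ ∀ e ∈ X', f e = f' e
  rback : ∀ X Y f a Y', R X Y f → D.RTranA Y Y' a →
    ∃ X' f', C.RTranA X X' a ∧ R X' Y' f' ∧ ∀ e ∈ X', f e = f' e

/-- Hereditary weak history-preserving bisimulation. -/
structure IsHWHBisim (C : CS E1 Act) (D : CS E2 Act)
    (R : Finset E1 → Finset E2 → (E1 → E2) → Prop) : Prop where
  root : ∃ f, R ∅ ∅ f
  iso : ∀ X Y f, R X Y f → IsIso C D X Y f
  forth : ∀ X Y f a X', R X Y f → C.TranA X X' a →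
    ∃ Y' f', D.TranA Y Y' a ∧ R X' Y' f'
  back : ∀ X Y f a Y', R X Y f → D.TranA Y Y' a →
    ∃ X' f', C.TranA X X' a ∧ R X' Y' f'
  rforth : ∀ X Y f a X', R X Y f → C.RTranA X X' a →
    ∃ Y' f', D.RTranA Y Y' a ∧ R X' Y' f' ∧ ∀ e ∈ X', f e = f' e
  rback : ∀ X Y f a Y', R X Y f → D.RTranA Y Y' a →
    ∃ X' f', C.RTranA X X' a ∧ R X' Y' f' ∧ ∀ e ∈ X', f e = f' e

/-- WH equivalence. -/
def WHEquiv (C : CS E1 Act) (D : CS E2 Act) : Prop := ∃ R, IsWHBisim C D R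

/-- H equivalence. -/
def HEquiv (C : CS E1 Act) (D : CS E2 Act) : Prop := ∃ R, IsHBisim C D R

/-- HH equivalence. -/
def HHEquiv (C : CS E1 Act) (D : CS E2 Act) : Prop := ∃ R, IsHHBisim C D R

/-- HWH equivalence. -/
def HWHEquiv (C : CS E1 Act) (D : CS E2 Act) : Prop := ∃ R, IsHWHBisim C D R


section Aux

variable {A : Type}

lemma sdiff_erase_eq {E : Type} {X : Finset E} {e : E} (he : e ∈ X) :
    X \ X.erase e = {e} := by
  classical
  ext b
  simp only [Finset.mem_sdiff, Finset.mem_erase, Finset.mem_singleton]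
  constructor
  · rintro ⟨hb, h⟩
    by_contra hne
    exact h ⟨hne, hb⟩
  · rintro rfl
    exact ⟨he, fun h => h.1 rfl⟩

lemma tranE_parts {E : Type} {C : CS E A} {X' X : Finset E} {e : E}
    (h : C.TranE X' X e) : e ∈ X ∧ X' = X.erase e := by
  classical
  obtain ⟨h1, h2, hsub, hdiff⟩ := h
  have he : e ∈ X \ X' := by rw [hdiff]; exact Finset.mem_singleton_self e
  have heX : e ∈ X := (Finset.mem_sdiff.mp he).1
  have heX' : e ∉ X' := (Finset.mem_sdiff.mp he).2
  refine ⟨heX, ?_⟩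
  ext b
  simp only [Finset.mem_erase]
  constructor
  · intro hb
    exact ⟨fun hbe => heX' (hbe ▸ hb), hsub hb⟩
  · rintro ⟨hbe, hbX⟩
    by_contra hbX'
    have hb : b ∈ X \ X' := Finset.mem_sdiff.mpr ⟨hbX, hbX'⟩
    rw [hdiff] at hb
    exact hbe (Finset.mem_singleton.mp hb)

lemma down_mem {E : Type} (C : CS E A) (hC : C.Stable) {X : Finset E}
    (hX : X ∈ C.Conf) {d : E} (hd : d ∈ X) :
    X.filter (fun a => C.le X a d) ∈ C.Conf := by
  classical
  set T : Finset (Finset E) := X.powerset.filter (fun Z => Z ∈ C.Conf ∧ d ∈ Z) with hT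
  have hXT : X ∈ T := by
    simp only [hT, Finset.mem_filter, Finset.mem_powerset]
    exact ⟨Finset.Subset.refl X, hX, hd⟩
  obtain ⟨Z₀, hZ₀T, hmin⟩ := T.exists_min_image Finset.card ⟨X, hXT⟩
  simp only [hT, Finset.mem_filter, Finset.mem_powerset] at hZ₀T
  obtain ⟨hZ₀X, hZ₀C, hdZ₀⟩ := hZ₀T
  have key : ∀ a ∈ Z₀, C.le X a d := by
    intro a ha Z hZC hZX hdZ
    have hinter : Z ∩ Z₀ ∈ C.Conf :=
      hC.interClosed Z hZC Z₀ hZ₀C X hX (Finset.union_subset hZX hZ₀X)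
    have hmem : Z ∩ Z₀ ∈ T := by
      simp only [hT, Finset.mem_filter, Finset.mem_powerset]
      exact ⟨Finset.inter_subset_left.trans hZX, hinter,
        Finset.mem_inter.mpr ⟨hdZ, hdZ₀⟩⟩
    have hcard := hmin _ hmem
    have heq : Z ∩ Z₀ = Z₀ :=
      Finset.eq_of_subset_of_card_le Finset.inter_subset_right hcard
    have hsub : Z₀ ⊆ Z := by
      rw [← heq]; exact Finset.inter_subset_left
    exact hsub ha
  have hEq : X.filter (fun a => C.le X a d) = Z₀ := by
    ext a
    simp only [Finset.mem_filter]
    constructor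
    · rintro ⟨haX, hle⟩
      exact hle Z₀ hZ₀C hZ₀X hdZ₀
    · intro ha
      exact ⟨hZ₀X ha, key a ha⟩
  rw [hEq]; exact hZ₀C

lemma leftClosed_mem {E : Type} (C : CS E A) (hC : C.Stable) {X S : Finset E}
    (hX : X ∈ C.Conf) (hSX : S ⊆ X)
    (hlc : ∀ d a, C.le X d a → a ∈ S → d ∈ S) : S ∈ C.Conf := by
  classical
  have key : ∀ S' : Finset E, S' ⊆ X →
      S'.biUnion (fun d => X.filter (fun a => C.le X a d)) ∈ C.Conf := by
    intro S'
    induction S' using Finset.induction_on with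
    | empty => intro _; simpa using hC.rooted
    | insert b S'' hni ih =>
      intro hsub
      rw [Finset.biUnion_insert]
      have h1 : X.filter (fun a => C.le X a b) ∈ C.Conf :=
        down_mem C hC hX (hsub (Finset.mem_insert_self _ _))
      have h2 := ih (fun c hc => hsub (Finset.mem_insert_of_mem hc))
      refine hC.unionClosed _ h1 _ h2 X hX ?_
      refine Finset.union_subset (Finset.filter_subset _ _) ?_
      intro c hc
      simp only [Finset.mem_biUnion, Finset.mem_filter] at hc
      obtain ⟨d, _, hcX, _⟩ := hc
      exact hcX
  have hEq : S.biUnion (fun d => X.filter (fun a => C.le X a d)) = S := by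
    ext a
    simp only [Finset.mem_biUnion, Finset.mem_filter]
    constructor
    · rintro ⟨d, hdS, haX, hle⟩
      exact hlc a d hle hdS
    · intro haS
      exact ⟨a, haS, hSX haS, fun Z _ _ h => h⟩
  have hk := key S hSX
  rwa [hEq] at hk

lemma le_local {E : Type} (C : CS E A) (hC : C.Stable) {W X : Finset E}
    (hW : W ∈ C.Conf) (hX : X ∈ C.Conf) (hWX : W ⊆ X) {d a : E} (ha : a ∈ W) :
    C.le W d a ↔ C.le X d a := by
  constructor
  · intro h Z hZC hZX haZ
    have hinter : Z ∩ W ∈ C.Conf :=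
      hC.interClosed Z hZC W hW X hX (Finset.union_subset hZX hWX)
    have hm := h (Z ∩ W) hinter Finset.inter_subset_right
      (Finset.mem_inter.mpr ⟨haZ, ha⟩)
    exact (Finset.mem_inter.mp hm).1
  · intro h Z hZC hZW haZ
    exact h Z hZC (hZW.trans hWX) haZ

variable {E1 E2 : Type}

lemma erase_transfer (C : CS E1 A) (D : CS E2 A) (hD : D.Stable)
    {X : Finset E1} {Y : Finset E2} {f : E1 → E2}
    (hX : X ∈ C.Conf) (hY : Y ∈ D.Conf) (hf : IsIso C D X Y f)
    {e : E1} (he : e ∈ X) (hXe : X.erase e ∈ C.Conf) :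
    Y.erase (f e) ∈ D.Conf := by
  obtain ⟨hmap, hinj, hsurj, hlab, hord⟩ := hf
  refine leftClosed_mem D hD hY (Finset.erase_subset _ _) ?_
  intro d' a' hle ha'
  have ha'Y : a' ∈ Y := Finset.mem_of_mem_erase ha'
  have ha'ne : a' ≠ f e := Finset.ne_of_mem_erase ha'
  have hd'Y : d' ∈ Y := hle Y hY (Finset.Subset.refl Y) ha'Y
  obtain ⟨d, hdX, rfl⟩ := hsurj d' hd'Y
  obtain ⟨a, haX, rfl⟩ := hsurj a' ha'Y
  have hane : a ≠ e := fun h => ha'ne (by rw [h])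
  have hleC : C.le X d a := (hord d hdX a haX).mpr hle
  have hdX' : d ∈ X.erase e :=
    hleC (X.erase e) hXe (Finset.erase_subset _ _) (Finset.mem_erase.mpr ⟨hane, haX⟩)
  have hdne : d ≠ e := (Finset.mem_erase.mp hdX').1
  exact Finset.mem_erase.mpr ⟨fun h => hdne (hinj d hdX e he h), hd'Y⟩

lemma erase_transfer' (C : CS E1 A) (D : CS E2 A) (hC : C.Stable)
    {X : Finset E1} {Y : Finset E2} {f : E1 → E2}
    (hX : X ∈ C.Conf) (hY : Y ∈ D.Conf) (hf : IsIso C D X Y f)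
    {e : E1} (he : e ∈ X) (hYe : Y.erase (f e) ∈ D.Conf) :
    X.erase e ∈ C.Conf := by
  obtain ⟨hmap, hinj, hsurj, hlab, hord⟩ := hf
  refine leftClosed_mem C hC hX (Finset.erase_subset _ _) ?_
  intro d a hle ha
  have haX : a ∈ X := Finset.mem_of_mem_erase ha
  have hane : a ≠ e := Finset.ne_of_mem_erase ha
  have hdX : d ∈ X := hle X hX (Finset.Subset.refl X) haX
  refine Finset.mem_erase.mpr ⟨?_, hdX⟩
  rintro rfl
  have hleD : D.le Y (f d) (f a) := (hord d hdX a haX).mp hle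
  have hfane : f a ≠ f d := fun h => hane (hinj a haX d he h)
  have hmem : f d ∈ Y.erase (f d) :=
    hleD (Y.erase (f d)) hYe (Finset.erase_subset _ _)
      (Finset.mem_erase.mpr ⟨hfane, hmap a haX⟩)
  exact (Finset.mem_erase.mp hmem).1 rfl

lemma iso_erase (C : CS E1 A) (D : CS E2 A) (hC : C.Stable) (hD : D.Stable)
    {X : Finset E1} {Y : Finset E2} {f : E1 → E2}
    (hX : X ∈ C.Conf) (hY : Y ∈ D.Conf) (hf : IsIso C D X Y f)
    {e : E1} (he : e ∈ X) (hXe : X.erase e ∈ C.Conf)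
    (hYe : Y.erase (f e) ∈ D.Conf) :
    IsIso C D (X.erase e) (Y.erase (f e)) f := by
  obtain ⟨hmap, hinj, hsurj, hlab, hord⟩ := hf
  refine ⟨?_, ?_, ?_, ?_, ?_⟩
  · intro d hd
    obtain ⟨hdne, hdX⟩ := Finset.mem_erase.mp hd
    exact Finset.mem_erase.mpr ⟨fun h => hdne (hinj d hdX e he h), hmap d hdX⟩
  · intro d hd a ha h
    exact hinj d (Finset.mem_of_mem_erase hd) a (Finset.mem_of_mem_erase ha) h
  · intro e' he'
    obtain ⟨hne, he'Y⟩ := Finset.mem_erase.mp he'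
    obtain ⟨d, hdX, rfl⟩ := hsurj e' he'Y
    exact ⟨d, Finset.mem_erase.mpr ⟨fun h => hne (by rw [h]), hdX⟩, rfl⟩
  · intro d hd
    exact hlab d (Finset.mem_of_mem_erase hd)
  · intro d hd a ha
    have hdX := Finset.mem_of_mem_erase hd
    have haX := Finset.mem_of_mem_erase ha
    have hfa : f a ∈ Y.erase (f e) := Finset.mem_erase.mpr
      ⟨fun h => (Finset.mem_erase.mp ha).1 (hinj a haX e he h), hmap a haX⟩
    rw [le_local C hC hXe hX (Finset.erase_subset _ _) ha,
        le_local D hD hYe hY (Finset.erase_subset _ _) hfa]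
    exact hord d hdX a haX

lemma main_ro {Id A' : Type} {C : CS E1 A'} {D : CS E2 A'}
    (hC : C.Stable) (hD : D.Stable)
    (φ : EIL Id A') (hφ : RO φ) :
    ∀ (X : Finset E1) (Y : Finset E2) (f : E1 → E2)
      (ρ : Id → Option E1) (ρ' : Id → Option E2),
      X ∈ C.Conf → Y ∈ D.Conf → IsIso C D X Y f →
      (∀ x ∈ φ.fi, ∃ e ∈ X, ρ x = some e ∧ ρ' x = some (f e)) →
      (Sat C φ X ρ ↔ Sat D φ Y ρ') := by
  induction hφ with
  | tt => intro X Y f ρ ρ' _ _ _ _; simp [Sat]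
  | neg hψ ih =>
    intro X Y f ρ ρ' hX hY hf hcompat
    simp only [Sat]
    exact not_congr (ih X Y f ρ ρ' hX hY hf hcompat)
  | conj hψ hχ ih1 ih2 =>
    intro X Y f ρ ρ' hX hY hf hcompat
    simp only [Sat]
    exact and_congr
      (ih1 X Y f ρ ρ' hX hY hf fun x hx => hcompat x (Or.inl hx))
      (ih2 X Y f ρ ρ' hX hY hf fun x hx => hcompat x (Or.inr hx))
  | decl hψ ih =>
    rename_i x a ψ
    intro X Y f ρ ρ' hX hY hf hcompat
    simp only [Sat]
    constructor
    · rintro ⟨e, he, hlabe, hsat⟩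
      refine ⟨f e, hf.1 e he, by rw [hf.2.2.2.1 e he, hlabe], ?_⟩
      refine (ih X Y f _ _ hX hY hf ?_).mp hsat
      intro y hy
      by_cases hyx : y = x
      · subst hyx
        exact ⟨e, he, by simp, by simp⟩
      · rw [Function.update_of_ne hyx, Function.update_of_ne hyx]
        exact hcompat y ⟨hy, hyx⟩
    · rintro ⟨e', he', hlabe', hsat'⟩
      obtain ⟨e, he, rfl⟩ := hf.2.2.1 e' he'
      have hlabe : C.label e = a := by rw [← hf.2.2.2.1 e he]; exact hlabe'
      refine ⟨e, he, hlabe, ?_⟩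
      refine (ih X Y f _ _ hX hY hf ?_).mpr hsat'
      intro y hy
      by_cases hyx : y = x
      · subst hyx
        exact ⟨e, he, by simp, by simp⟩
      · rw [Function.update_of_ne hyx, Function.update_of_ne hyx]
        exact hcompat y ⟨hy, hyx⟩
  | rev hψ ih =>
    rename_i x ψ
    intro X Y f ρ ρ' hX hY hf hcompat
    obtain ⟨e₀, he₀, hρx, hρ'x⟩ := hcompat x (Or.inr rfl)
    simp only [Sat]
    constructor
    · rintro ⟨e, X', hrt, hρxe, hperm, hsat⟩
      have he : e = e₀ := by rw [hρx] at hρxe; exact (Option.some_inj.mp hρxe).symm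
      subst he
      obtain ⟨heX, hX'eq⟩ := tranE_parts hrt
      subst hX'eq
      obtain ⟨hXe, -, -, -⟩ := hrt
      have hYe : Y.erase (f e) ∈ D.Conf := erase_transfer C D hD hX hY hf heX hXe
      have hiso := iso_erase C D hC hD hX hY hf heX hXe hYe
      have hcompat' : ∀ y ∈ ψ.fi,
          ∃ d ∈ X.erase e, ρ y = some d ∧ ρ' y = some (f d) := by
        intro y hy
        obtain ⟨d, hd, hρy⟩ := hperm y hy
        obtain ⟨d₀, hd₀, hρy₀, hρ'y⟩ := hcompat y (Or.inl hy)
        have hdd : d = d₀ := by rw [hρy] at hρy₀; exact Option.some_inj.mp hρy₀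
        subst hdd
        exact ⟨d, hd, hρy, hρ'y⟩
      refine ⟨f e, Y.erase (f e),
        ⟨hYe, hY, Finset.erase_subset _ _, sdiff_erase_eq (hf.1 e heX)⟩, hρ'x, ?_, ?_⟩
      · intro y hy
        obtain ⟨d, hd, _, hρ'y⟩ := hcompat' y hy
        exact ⟨f d, hiso.1 d hd, hρ'y⟩
      · exact (ih (X.erase e) (Y.erase (f e)) f ρ ρ' hXe hYe hiso hcompat').mp hsat
    · rintro ⟨e', Y'', hrt, hρ'xe, hperm', hsat'⟩
      have he' : e' = f e₀ := by
        rw [hρ'x] at hρ'xe; exact (Option.some_inj.mp hρ'xe).symm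
      subst he'
      obtain ⟨hfY, hY''eq⟩ := tranE_parts hrt
      subst hY''eq
      obtain ⟨hYe, -, -, -⟩ := hrt
      have hXe : X.erase e₀ ∈ C.Conf := erase_transfer' C D hC hX hY hf he₀ hYe
      have hiso := iso_erase C D hC hD hX hY hf he₀ hXe hYe
      have hcompat' : ∀ y ∈ ψ.fi,
          ∃ d ∈ X.erase e₀, ρ y = some d ∧ ρ' y = some (f d) := by
        intro y hy
        obtain ⟨d, hd, hρy, hρ'y⟩ := hcompat y (Or.inl hy)
        obtain ⟨d', hd', hρ'y'⟩ := hperm' y hy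
        have hdd : d' = f d := by rw [hρ'y] at hρ'y'; exact (Option.some_inj.mp hρ'y').symm
        subst hdd
        have hdne : d ≠ e₀ := by
          intro h
          subst h
          exact (Finset.mem_erase.mp hd').1 rfl
        exact ⟨d, Finset.mem_erase.mpr ⟨hdne, hd⟩, hρy, hρ'y⟩
      refine ⟨e₀, X.erase e₀,
        ⟨hXe, hX, Finset.erase_subset _ _, sdiff_erase_eq he₀⟩, hρx, ?_, ?_⟩
      · intro y hy
        obtain ⟨d, hd, hρy, _⟩ := hcompat' y hy
        exact ⟨d, hd, hρy⟩
      · exact (ih (X.erase e₀) (Y.erase (f e₀)) f ρ ρ' hXe hYe hiso hcompat').mpr hsat'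

end Aux

/-- reverse-only formulas are preserved by label-preserving order
isomorphisms between configurations. -/
theorem stmt0 {E1 E2 Id Act : Type} [Infinite Id]
    (C : CS E1 Act) (D : CS E2 Act)
    (hC : C.Stable) (hCif : C.ImageFinite)
    (hD : D.Stable) (hDif : D.ImageFinite)
    (X : Finset E1) (hX : X ∈ C.Conf) (Y : Finset E2) (hY : Y ∈ D.Conf)
    (f : E1 → E2) (hf : IsIso C D X Y f)
    (φ : EIL Id Act) (hφ : RO φ)
    (ρ : Id → Option E1) (hρ : Permissible φ ρ X) :
    Sat C φ X ρ ↔ Sat D φ Y (fun x => if x ∈ φ.fi then (ρ x).map f else none) := by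
  refine main_ro hC hD φ hφ X Y f ρ _ hX hY hf ?_
  intro x hx
  obtain ⟨e, he, hρx⟩ := hρ x hx
  exact ⟨e, he, hρx, by simp [hx, hρx]⟩

end EILPaper
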